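/- The function ρ(b,c) = |b-c|/(1-bc) defines a metric on the open interval (-1,1): it is nonnegative, vanishes exactly when b = c, is symmetric, and satisfies the triangle inequality ρ(a,c) ≤ ρ(a,b) + ρ(b,c) for all a,b,c ∈ (-1,1). -/
import Mathlib


/-- The hyperbolic-type distance `ρ(b,c) = |b - c| / (1 - b c)` on `(-1,1)`. -/
noncomputable def neelRho (b c : ℝ) : ℝ := |b - c| / (1 - b * c)

lemma neelDen_pos {b c : ℝ} (hb : b ∈ Set.Ioo (-1 : ℝ) 1) (hc : c ∈ Set.Ioo (-1 : ℝ) 1) :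
    0 < 1 - b * c := by
  obtain ⟨hb1, hb2⟩ := hb; obtain ⟨hc1, hc2⟩ := hc
  nlinarith

lemma neelTriangle {a b c : ℝ} (ha : a ∈ Set.Ioo (-1 : ℝ) 1) (hb : b ∈ Set.Ioo (-1 : ℝ) 1)
    (hc : c ∈ Set.Ioo (-1 : ℝ) 1) : neelRho a c ≤ neelRho a b + neelRho b c := by
  have hab := neelDen_pos ha hb
  have hbc := neelDen_pos hb hc
  have hac := neelDen_pos ha hc
  have haa := neelDen_pos ha ha
  have hcc := neelDen_pos hc hc
  obtain ⟨ha1, ha2⟩ := ha; obtain ⟨hb1, hb2⟩ := hb; obtain ⟨hc1, hc2⟩ := hc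
  rw [neelRho, neelRho, neelRho, div_add_div _ _ (ne_of_gt hab) (ne_of_gt hbc),
    div_le_div_iff₀ hac (by positivity)]
  rcases abs_cases (a - b) with ⟨e1, s1⟩ | ⟨e1, s1⟩ <;>
    rcases abs_cases (b - c) with ⟨e2, s2⟩ | ⟨e2, s2⟩ <;>
    rcases abs_cases (a - c) with ⟨e3, s3⟩ | ⟨e3, s3⟩ <;>
    rw [e1, e2, e3]
  · nlinarith [mul_nonneg (mul_nonneg s1 s2) s3]
  · linarith
  · nlinarith [mul_nonneg (by linarith : (0:ℝ) ≤ c - b)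
      (add_nonneg (mul_pos hab hac).le (mul_pos haa hbc).le)]
  · nlinarith [mul_nonneg s1 (add_nonneg (mul_pos hbc hac).le (mul_pos hcc hab).le)]
  · nlinarith [mul_nonneg (by linarith : (0:ℝ) ≤ b - a)
      (add_nonneg (mul_pos hbc hac).le (mul_pos hcc hab).le)]
  · nlinarith [mul_nonneg s2 (add_nonneg (mul_pos hab hac).le (mul_pos haa hbc).le)]
  · linarith
  · nlinarith [mul_nonneg (mul_nonneg (by linarith : (0:ℝ) ≤ b - a)
      (by linarith : (0:ℝ) ≤ c - b)) (by linarith : (0:ℝ) ≤ c - a)]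

theorem neelRho_is_metric :
    (∀ b ∈ Set.Ioo (-1 : ℝ) 1, ∀ c ∈ Set.Ioo (-1 : ℝ) 1, 0 ≤ neelRho b c) ∧
    (∀ b ∈ Set.Ioo (-1 : ℝ) 1, ∀ c ∈ Set.Ioo (-1 : ℝ) 1, (neelRho b c = 0 ↔ b = c)) ∧
    (∀ b ∈ Set.Ioo (-1 : ℝ) 1, ∀ c ∈ Set.Ioo (-1 : ℝ) 1, neelRho b c = neelRho c b) ∧
    (∀ a ∈ Set.Ioo (-1 : ℝ) 1, ∀ b ∈ Set.Ioo (-1 : ℝ) 1, ∀ c ∈ Set.Ioo (-1 : ℝ) 1,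
      neelRho a c ≤ neelRho a b + neelRho b c) := by
  refine ⟨fun b hb c hc => ?_, fun b hb c hc => ?_, fun b hb c hc => ?_,
    fun a ha b hb c hc => neelTriangle ha hb hc⟩
  · exact div_nonneg (abs_nonneg _) (neelDen_pos hb hc).le
  · rw [neelRho, div_eq_zero_iff, abs_eq_zero, sub_eq_zero]
    have := neelDen_pos hb hc
    constructor
    · rintro (h | h)
      · exact h
      · linarith
    · exact fun h => Or.inl h
  · rw [neelRho, neelRho, abs_sub_comm, mul_comm]
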